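/- arXiv:2206.10685 — 3 statements merged into one kernel-verified Lean document; each statement's English description precedes it below -/
import Mathlib

section
/- Sensitivity of a single mutual-information summand (Case p > p', gap 1/n): Let n ≥ 6, let p and m be reals with 2/n ≤ p ≤ m ≤ 1. Then |−(1/n)·log₂ m + p·log₂ p − (p − 1/n)·log₂(p − 1/n)| ≤ (log₂ n)/n + 2/n. -/
theorem stmt_10 (n : ℕ) (hn : 6 ≤ n) (p m : ℝ)
    (hp : 2 / n ≤ p) (hpm : p ≤ m) (hm : m ≤ 1) :
    |-(1 / n) * Real.logb 2 m + p * Real.logb 2 p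
      - (p - 1 / n) * Real.logb 2 (p - 1 / n)| ≤ Real.logb 2 n / n + 2 / n := by
  have hn6 : (6 : ℝ) ≤ n := by exact_mod_cast hn
  have hnpos : (0 : ℝ) < n := by linarith
  have h1n : (0 : ℝ) < 1 / n := by positivity
  have h2n : (0 : ℝ) < 2 / n := by positivity
  have hp0 : 0 < p := lt_of_lt_of_le h2n hp
  have hq0 : 0 < p - 1 / n := by
    have : (1 : ℝ) / n < 2 / n := (div_lt_div_iff_of_pos_right hnpos).mpr (by norm_num)
    linarith
  have hm0 : 0 < m := lt_of_lt_of_le hp0 hpm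
  have hlog2 : 0 < Real.log 2 := Real.log_pos (by norm_num)
  have hlog2half : (1 : ℝ) / 2 ≤ Real.log 2 := by
    have := Real.log_two_gt_d9; linarith
  set q : ℝ := p - 1 / n with hqdef
  simp only [Real.logb]
  have key : -(1 / n) * (Real.log m / Real.log 2) + p * (Real.log p / Real.log 2)
      - q * (Real.log q / Real.log 2)
      = q * (Real.log p - Real.log q) / Real.log 2
        + (1 / n) * (Real.log p - Real.log m) / Real.log 2 := by
    have hpq : p = q + 1 / n := by rw [hqdef]; ring
    rw [hpq]; ring
  rw [key]
  -- bound term 1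
  have hpq1 : p - q = 1 / n := by rw [hqdef]; ring
  have hlp : Real.log p - Real.log q ≤ (1 / n) / q := by
    have h := Real.log_le_sub_one_of_pos (show 0 < p / q by positivity)
    rw [Real.log_div hp0.ne' hq0.ne'] at h
    have heq : p / q - 1 = (1 / n) / q := by
      rw [← hpq1]; field_simp
    linarith
  have t1nn : 0 ≤ q * (Real.log p - Real.log q) := by
    have : Real.log q ≤ Real.log p := Real.log_le_log hq0 (by rw [hqdef]; linarith)
    nlinarith
  have t1 : q * (Real.log p - Real.log q) / Real.log 2 ≤ 2 / n := by
    have h1 : q * (Real.log p - Real.log q) ≤ 1 / n := by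
      have := mul_le_mul_of_nonneg_left hlp hq0.le
      rw [mul_div_cancel₀ _ hq0.ne'] at this
      linarith
    rw [div_le_iff₀ hlog2]
    have h2 : 2 / (n : ℝ) * (1 / 2) ≤ 2 / n * Real.log 2 :=
      mul_le_mul_of_nonneg_left hlog2half h2n.le
    have h3 : 2 / (n : ℝ) * (1 / 2) = 1 / n := by ring
    linarith
  -- bound term 2
  have hlmp : Real.log m - Real.log p ≤ Real.log n := by
    have hm1 : Real.log m ≤ 0 := Real.log_nonpos hm0.le hm
    have hp1 : Real.log 2 - Real.log n ≤ Real.log p := by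
      have : Real.log (2 / n) ≤ Real.log p := Real.log_le_log h2n hp
      rwa [Real.log_div (by norm_num) hnpos.ne'] at this
    linarith
  have hlogp : Real.log p ≤ Real.log m := Real.log_le_log hp0 hpm
  have t2 : |1 / (n : ℝ) * (Real.log p - Real.log m) / Real.log 2|
      ≤ Real.log n / Real.log 2 / n := by
    have habs : |1 / (n : ℝ) * (Real.log p - Real.log m) / Real.log 2|
        = (Real.log m - Real.log p) / (Real.log 2 * n) := by
      rw [abs_div, abs_mul, abs_of_pos hlog2, abs_of_pos h1n,
        abs_of_nonpos (show Real.log p - Real.log m ≤ 0 by linarith)]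
      ring
    rw [habs]
    calc (Real.log m - Real.log p) / (Real.log 2 * n)
        ≤ Real.log n / (Real.log 2 * n) := by gcongr
      _ = Real.log n / Real.log 2 / n := by rw [div_div]
  calc |q * (Real.log p - Real.log q) / Real.log 2
        + 1 / n * (Real.log p - Real.log m) / Real.log 2|
      ≤ |q * (Real.log p - Real.log q) / Real.log 2|
        + |1 / n * (Real.log p - Real.log m) / Real.log 2| := abs_add_le _ _
    _ ≤ 2 / n + Real.log n / Real.log 2 / n := by
        gcongr
        rw [abs_of_nonneg (by positivity)]; exact t1
    _ = Real.log n / Real.log 2 / n + 2 / n := by ring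
end

section
/- Sensitivity of a single mutual-information summand (Case p' > p, gap 1/n): Let n ≥ 6, let p and m be reals with 1/n ≤ p, p + 1/n ≤ m ≤ 1. Then |(1/n)·log₂ m + p·log₂ p − (p + 1/n)·log₂(p + 1/n)| ≤ (log₂ n)/n + 3/n. -/
theorem stmt_11 (n : ℕ) (hn : 6 ≤ n) (p m : ℝ)
    (hp : 1 / n ≤ p) (hpm : p + 1 / n ≤ m) (hm : m ≤ 1) :
    |(1 / n) * Real.logb 2 m + p * Real.logb 2 p
      - (p + 1 / n) * Real.logb 2 (p + 1 / n)| ≤ Real.logb 2 n / n + 3 / n := by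
  have hn' : (6:ℝ) ≤ (n:ℝ) := by exact_mod_cast hn
  have hnpos : (0:ℝ) < n := by linarith
  have hε : (0:ℝ) < 1/(n:ℝ) := by positivity
  have hp0 : 0 < p := lt_of_lt_of_le hε hp
  have hpe : 0 < p + 1/(n:ℝ) := by linarith
  have hm0 : 0 < m := lt_of_lt_of_le hpe hpm
  have hlog2 : (0:ℝ) < Real.log 2 := Real.log_pos one_lt_two
  have hlog2' : (1:ℝ)/3 < Real.log 2 := by
    have := Real.log_two_gt_d9; linarith
  set A := Real.logb 2 m with hA
  set B := Real.logb 2 p with hB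
  set C := Real.logb 2 (p + 1/(n:ℝ)) with hC
  set N := Real.logb 2 (n:ℝ) with hN
  have hBC : B ≤ C := (Real.logb_le_logb one_lt_two hp0 hpe).mpr (by linarith)
  have hCA : C ≤ A := (Real.logb_le_logb one_lt_two hpe hm0).mpr hpm
  have hA0 : A ≤ 0 := Real.logb_nonpos one_lt_two hm0.le hm
  have hN0 : 0 ≤ N := Real.logb_nonneg one_lt_two (by linarith)
  have hNC : -N ≤ C := by
    have h1 : Real.logb 2 (1/(n:ℝ)) ≤ C :=
      (Real.logb_le_logb one_lt_two hε hpe).mpr (by linarith)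
    rwa [one_div, Real.logb_inv] at h1
  have hCB : p * (C - B) ≤ 3/(n:ℝ) := by
    have hdiv : Real.log ((p + 1/(n:ℝ))/p) ≤ (p + 1/(n:ℝ))/p - 1 :=
      Real.log_le_sub_one_of_pos (by positivity)
    rw [Real.log_div (by linarith) (ne_of_gt hp0)] at hdiv
    have h2 : (p + 1/(n:ℝ))/p - 1 = (1/(n:ℝ))/p := by field_simp; ring
    rw [h2] at hdiv
    have hCBval : C - B = (Real.log (p + 1/(n:ℝ)) - Real.log p) / Real.log 2 := by
      rw [hB, hC]; unfold Real.logb; ring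
    calc p * (C - B)
        = p * ((Real.log (p + 1/(n:ℝ)) - Real.log p) / Real.log 2) := by rw [hCBval]
      _ ≤ p * ((1/(n:ℝ)/p) / Real.log 2) := by gcongr
      _ = (1/(n:ℝ)) / Real.log 2 := by field_simp
      _ ≤ 3/(n:ℝ) := by
          rw [div_le_div_iff₀ hlog2 hnpos, one_div, inv_mul_cancel₀ (ne_of_gt hnpos)]
          linarith
  have hE : (1/(n:ℝ)) * A + p * B - (p + 1/(n:ℝ)) * C
      = (1/(n:ℝ)) * (A - C) - p * (C - B) := by ring
  have hNn : 0 ≤ N / (n:ℝ) := div_nonneg hN0 hnpos.le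
  rw [abs_le]
  constructor
  · rw [hE]
    have h1 : 0 ≤ (1/(n:ℝ)) * (A - C) := by
      have := sub_nonneg.mpr hCA; positivity
    nlinarith
  · rw [hE]
    have h2 : (1/(n:ℝ)) * (A - C) ≤ (1/(n:ℝ)) * N := by
      apply mul_le_mul_of_nonneg_left _ hε.le
      linarith
    have h3 : 0 ≤ p * (C - B) := by
      have := sub_nonneg.mpr hBC; positivity
    have h4 : (1/(n:ℝ)) * N = N / n := by ring
    nlinarith
end

section
/- Sensitivity of a single mutual-information summand (Case p > p', gap 2/n): Let n ≥ 6, let p and m be reals with 3/n ≤ p ≤ m ≤ 1. Then |−(2/n)·log₂ m + p·log₂ p − (p − 2/n)·log₂(p − 2/n)| ≤ (2·log₂ n)/n + 4.8/n. -/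
lemma stmt_12_aux (a b d N p c r s : ℝ)
    (ha0 : a ≤ 0) (hb0 : b ≤ 0) (haN : -N ≤ a) (hdN : -N ≤ d) (hdb : d ≤ b)
    (hp : 0 ≤ p) (hc : 0 ≤ c) (hkey : (p - c) * (b - d) ≤ r) (hr : r ≤ s) (hs : 0 ≤ s) :
    |-c * a + p * b - (p - c) * d| ≤ c * N + s := by
  rw [abs_le]
  have t1 : 0 ≤ c * (-a) := mul_nonneg hc (by linarith)
  have t2 : 0 ≤ p * (b - d) := mul_nonneg hp (by linarith)
  have t3 : c * (-N) ≤ c * d := mul_le_mul_of_nonneg_left hdN hc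
  have t4 : c * (-a) ≤ c * N := mul_le_mul_of_nonneg_left (by linarith) hc
  have t5 : c * b ≤ 0 := mul_nonpos_of_nonneg_of_nonpos hc hb0
  constructor
  · nlinarith [t1, t2, t3]
  · nlinarith [t4, t5, hkey]

theorem stmt_12 (n : ℕ) (hn : 6 ≤ n) (p m : ℝ)
    (hp : 3 / n ≤ p) (hpm : p ≤ m) (hm : m ≤ 1) :
    |-(2 / n) * Real.logb 2 m + p * Real.logb 2 p
      - (p - 2 / n) * Real.logb 2 (p - 2 / n)| ≤ 2 * Real.logb 2 n / n + 4.8 / n := by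
  have hb : (1:ℝ) < 2 := one_lt_two
  have hn6 : (6:ℝ) ≤ n := by exact_mod_cast hn
  have hnpos : (0:ℝ) < n := by linarith
  have hninv : (0:ℝ) < 1/n := by positivity
  have hpc : 1/n ≤ p - 2/n := by
    have h3 : (3:ℝ)/n = 1/n + 2/n := by ring
    linarith [h3 ▸ hp]
  have hpcpos : 0 < p - 2/n := lt_of_lt_of_le hninv hpc
  have h2npos : (0:ℝ) < 2/n := by positivity
  have hppos : 0 < p := by linarith
  have hmpos : 0 < m := lt_of_lt_of_le hppos hpm
  have hp1 : p ≤ 1 := le_trans hpm hm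
  have hlog2 : (0.6931471803:ℝ) < Real.log 2 := Real.log_two_gt_d9
  have hlogpos : 0 < Real.log 2 := by linarith
  have hinvn : Real.logb 2 (1/n) = -Real.logb 2 n := by
    rw [one_div, Real.logb_inv]
  have haN : -Real.logb 2 n ≤ Real.logb 2 m := by
    rw [← hinvn]
    exact Real.logb_le_logb_of_le hb hninv (by linarith)
  have hdN : -Real.logb 2 n ≤ Real.logb 2 (p - 2/n) := by
    rw [← hinvn]
    exact Real.logb_le_logb_of_le hb hninv hpc
  have ha0 : Real.logb 2 m ≤ 0 := Real.logb_nonpos hb (le_of_lt hmpos) hm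
  have hb0 : Real.logb 2 p ≤ 0 := Real.logb_nonpos hb (le_of_lt hppos) hp1
  have hdb : Real.logb 2 (p - 2/n) ≤ Real.logb 2 p :=
    Real.logb_le_logb_of_le hb hpcpos (by linarith)
  -- key bound: (p - 2/n) * (logb p - logb (p - 2/n)) ≤ 2.9/n
  have hkey : (p - 2/n) * (Real.logb 2 p - Real.logb 2 (p - 2/n)) ≤ 2.9/n := by
    have hfrac : 0 < p / (p - 2/n) := by positivity
    have h1 := Real.log_le_sub_one_of_pos hfrac
    rw [Real.log_div (ne_of_gt hppos) (ne_of_gt hpcpos)] at h1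
    have h2 : p / (p - 2/n) - 1 = (2/n) / (p - 2/n) := by
      rw [div_sub_one (ne_of_gt hpcpos)]
      congr 1
      ring
    rw [h2] at h1
    have h5 : (p - 2/n) * (Real.log p - Real.log (p - 2/n)) ≤ 2/n := by
      calc (p - 2/n) * (Real.log p - Real.log (p - 2/n))
          ≤ (p - 2/n) * ((2/n) / (p - 2/n)) :=
            mul_le_mul_of_nonneg_left h1 (le_of_lt hpcpos)
        _ = 2/n := by
            rw [mul_comm, div_mul_cancel₀ _ (ne_of_gt hpcpos)]
    have hbd : Real.logb 2 p - Real.logb 2 (p - 2/n)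
        = (Real.log p - Real.log (p - 2/n)) / Real.log 2 := by
      rw [Real.logb, Real.logb]; ring
    have h6 : (p - 2/n) * (Real.logb 2 p - Real.logb 2 (p - 2/n))
        = (p - 2/n) * (Real.log p - Real.log (p - 2/n)) / Real.log 2 := by
      rw [hbd]; ring
    rw [h6]
    rw [div_le_div_iff₀ hlogpos hnpos]
    have h7 : (p - 2/n) * (Real.log p - Real.log (p - 2/n)) * n ≤ (2/n) * n :=
      mul_le_mul_of_nonneg_right h5 (le_of_lt hnpos)
    have h8 : (2:ℝ)/n * n = 2 := by field_simp
    nlinarith [h7, h8]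
  have hr : (2.9:ℝ)/n ≤ 4.8/n := by gcongr <;> norm_num
  have hs : (0:ℝ) ≤ 4.8/n := by positivity
  calc |-(2 / n) * Real.logb 2 m + p * Real.logb 2 p
      - (p - 2 / n) * Real.logb 2 (p - 2 / n)|
      ≤ (2/n) * Real.logb 2 n + 4.8/n :=
        stmt_12_aux (Real.logb 2 m) (Real.logb 2 p) (Real.logb 2 (p - 2/n))
          (Real.logb 2 n) p (2/n) (2.9/n) (4.8/n)
          ha0 hb0 haN hdN hdb (le_of_lt hppos) (le_of_lt h2npos) hkey hr hs
    _ = 2 * Real.logb 2 n / n + 4.8 / n := by ring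
end
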